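/- Let G be an n-vertex k-regular graph with partition V(G) = X ∪ Y. Then T(G) >= e(X)·(2k - |Y|) - φ(G[X]), where e(X) is the number of edges inside X, φ(G[X]) is the sum of the squares of the degrees of vertices in the induced subgraph G[X], and T(G) is the number of triangles in G. -/

import Mathlib

open Finset SimpleGraph

private def indG {V : Type*} [DecidableEq V] (G : SimpleGraph V) (X : Finset V) :
    SimpleGraph V where
  Adj u v := G.Adj u v ∧ u ∈ X ∧ v ∈ X
  symm := ⟨fun u v h => ⟨h.1.symm, h.2.2, h.2.1⟩⟩
  loopless := ⟨fun u h => G.loopless.irrefl u h.1⟩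

private instance {V : Type*} [DecidableEq V] (G : SimpleGraph V) [DecidableRel G.Adj]
    (X : Finset V) : DecidableRel (indG G X).Adj :=
  fun u v => inferInstanceAs (Decidable (G.Adj u v ∧ u ∈ X ∧ v ∈ X))

private lemma indG_adj {V : Type*} [DecidableEq V] (G : SimpleGraph V) (X : Finset V)
    {u v : V} : (indG G X).Adj u v ↔ G.Adj u v ∧ u ∈ X ∧ v ∈ X := Iff.rfl

private lemma pair_inj_aux {V : Type*} [DecidableEq V] {X : Finset V}
    {a b c d w w' : V} (ha : a ∈ X) (hb : b ∈ X) (hc : c ∈ X) (hd : d ∈ X)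
    (hw : w ∉ X) (hw' : w' ∉ X) (hab : a ≠ b)
    (h : (insert w {a, b} : Finset V) = insert w' {c, d}) :
    w = w' ∧ s(a, b) = s(c, d) := by
  have hww' : w = w' := by
    have : w ∈ insert w' ({c, d} : Finset V) := h ▸ Finset.mem_insert_self w {a, b}
    rcases Finset.mem_insert.1 this with h1 | h1
    · exact h1
    · rcases Finset.mem_insert.1 h1 with h2 | h2
      · exact absurd (h2 ▸ hc) hw
      · exact absurd ((Finset.mem_singleton.1 h2) ▸ hd) hw
  refine ⟨hww', ?_⟩
  have hamem : a ∈ insert w' ({c, d} : Finset V) := by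
    rw [← h]; exact Finset.mem_insert_of_mem (Finset.mem_insert_self a {b})
  have hbmem : b ∈ insert w' ({c, d} : Finset V) := by
    rw [← h]
    exact Finset.mem_insert_of_mem (Finset.mem_insert_of_mem (Finset.mem_singleton_self b))
  have ha' : a = c ∨ a = d := by
    rcases Finset.mem_insert.1 hamem with h1 | h1
    · exact absurd (h1 ▸ ha) hw'
    · simpa using h1
  have hb' : b = c ∨ b = d := by
    rcases Finset.mem_insert.1 hbmem with h1 | h1
    · exact absurd (h1 ▸ hb) hw'
    · simpa using h1
  rcases ha' with rfl | rfl <;> rcases hb' with rfl | rfl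
  · exact absurd rfl hab
  · rfl
  · exact Sym2.eq_swap
  · exact absurd rfl hab

theorem stmt6 {V : Type*} [Fintype V] [DecidableEq V] (G : SimpleGraph V)
    [DecidableRel G.Adj] (n k : ℕ) (hn : Fintype.card V = n)
    (hreg : G.IsRegularOfDegree k) (X : Finset V) :
    ((G.cliqueFinset 3).card : ℤ) ≥
      ((G.edgeFinset.filter (fun e => ∀ x ∈ e, x ∈ X)).card : ℤ) *
        (2 * k - (Xᶜ : Finset V).card) -
      ∑ x ∈ X, ((G.neighborFinset x ∩ X).card : ℤ) ^ 2 := by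
  classical
  set E := G.edgeFinset.filter (fun e => ∀ x ∈ e, x ∈ X) with hE
  set dX : V → ℕ := fun x => (G.neighborFinset x ∩ X).card with hdX
  set W : Sym2 V → Finset V :=
    fun e => Finset.univ.filter (fun w => w ∉ X ∧ ∀ x ∈ e, G.Adj x w) with hW
  have hEmem : ∀ {a b : V}, s(a, b) ∈ E → G.Adj a b ∧ a ∈ X ∧ b ∈ X := by
    intro a b h
    rw [hE, Finset.mem_filter, mem_edgeFinset, mem_edgeSet] at h
    exact ⟨h.1, (Sym2.forall_mem_pair.1 h.2).1, (Sym2.forall_mem_pair.1 h.2).2⟩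
  -- Step 1 : injection from the sigma type into triangles
  have key1 : (E.sigma W).card ≤ (G.cliqueFinset 3).card := by
    apply Finset.card_le_card_of_injOn
      (fun p => insert p.2 (Sym2.lift ⟨fun a b => ({a, b} : Finset V),
        fun a b => Finset.pair_comm a b⟩ p.1))
    · rintro ⟨e, w⟩ hp
      rw [Finset.mem_coe, Finset.mem_sigma] at hp
      induction e using Sym2.ind with
      | _ a b =>
        obtain ⟨hab, haX, hbX⟩ := hEmem hp.1
        have hp2 := hp.2
        rw [hW, Finset.mem_filter] at hp2
        obtain ⟨hwX, hadj⟩ := hp2.2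
        obtain ⟨haw, hbw⟩ := Sym2.forall_mem_pair.1 hadj
        rw [Finset.mem_coe, mem_cliqueFinset_iff]
        show G.IsNClique 3 {w, a, b}
        exact is3Clique_triple_iff.2 ⟨haw.symm, hbw.symm, hab⟩
    · rintro ⟨e, w⟩ hp ⟨e', w'⟩ hq heq
      simp only [Finset.coe_sort_coe, Finset.mem_coe, Finset.mem_sigma] at hp hq
      induction e using Sym2.ind with
      | _ a b =>
        induction e' using Sym2.ind with
        | _ c d =>
          obtain ⟨hab, haX, hbX⟩ := hEmem hp.1
          obtain ⟨hcd, hcX, hdX'⟩ := hEmem hq.1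
          have hwX : w ∉ X := (Finset.mem_filter.1 hp.2).2.1
          have hw'X : w' ∉ X := (Finset.mem_filter.1 hq.2).2.1
          simp only [Sym2.lift_mk] at heq
          obtain ⟨h1, h2⟩ := pair_inj_aux haX hbX hcX hdX' hwX hw'X hab.ne heq
          subst h1
          simp [h2]
  have key2 : ((E.sigma W).card : ℤ) = ∑ e ∈ E, ((W e).card : ℤ) := by
    rw [Finset.card_sigma]; push_cast; ring
  -- Step 2 : per-edge lower bound
  have key3 : ∀ e ∈ E, (2 * k - ((Xᶜ : Finset V).card : ℤ))
      - (∑ x ∈ Finset.univ.filter (· ∈ e), (dX x : ℤ)) ≤ ((W e).card : ℤ) := by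
    intro e he
    induction e using Sym2.ind with
    | _ a b =>
      obtain ⟨hab, haX, hbX⟩ := hEmem he
      have hfilter : Finset.univ.filter (· ∈ s(a, b)) = ({a, b} : Finset V) := by
        ext x; simp [Sym2.mem_iff]
      rw [hfilter, Finset.sum_pair hab.ne]
      have hWeq : W s(a, b) = (G.neighborFinset a \ X) ∩ (G.neighborFinset b \ X) := by
        ext w
        simp only [hW, Finset.mem_filter, Finset.mem_univ, true_and, Sym2.forall_mem_pair,
          Finset.mem_inter, Finset.mem_sdiff, mem_neighborFinset]
        tauto
      have hsub : (G.neighborFinset a \ X) ∪ (G.neighborFinset b \ X) ⊆ Xᶜ := by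
        intro w hw
        rw [Finset.mem_compl]
        rcases Finset.mem_union.1 hw with h | h <;> exact (Finset.mem_sdiff.1 h).2
      have hcardA : ((G.neighborFinset a \ X).card : ℤ) = k - dX a := by
        have h1 := Finset.card_inter_add_card_sdiff (G.neighborFinset a) X
        have hdeg : (G.neighborFinset a).card = k := hreg a
        rw [hdeg] at h1
        simp only [hdX]
        omega
      have hcardB : ((G.neighborFinset b \ X).card : ℤ) = k - dX b := by
        have h1 := Finset.card_inter_add_card_sdiff (G.neighborFinset b) X
        have hdeg : (G.neighborFinset b).card = k := hreg b
        rw [hdeg] at h1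
        simp only [hdX]
        omega
      have hie := Finset.card_union_add_card_inter (G.neighborFinset a \ X)
        (G.neighborFinset b \ X)
      have hle : ((G.neighborFinset a \ X) ∪ (G.neighborFinset b \ X)).card
          ≤ (Xᶜ : Finset V).card := Finset.card_le_card hsub
      rw [hWeq]
      omega
  -- Step 3 : the degree-square identity
  have key4 : ∑ e ∈ E, (∑ x ∈ Finset.univ.filter (· ∈ e), (dX x : ℤ))
      = ∑ x ∈ X, (dX x : ℤ) ^ 2 := by
    have hswap : ∑ e ∈ E, (∑ x ∈ Finset.univ.filter (· ∈ e), (dX x : ℤ))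
        = ∑ x : V, (dX x : ℤ) * ((E.filter (fun e => x ∈ e)).card : ℤ) := by
      calc ∑ e ∈ E, ∑ x ∈ Finset.univ.filter (· ∈ e), (dX x : ℤ)
          = ∑ e ∈ E, ∑ x : V, if x ∈ e then (dX x : ℤ) else 0 := by
            refine Finset.sum_congr rfl fun e _ => ?_
            rw [Finset.sum_filter]
        _ = ∑ x : V, ∑ e ∈ E, if x ∈ e then (dX x : ℤ) else 0 := Finset.sum_comm
        _ = ∑ x : V, (dX x : ℤ) * ((E.filter (fun e => x ∈ e)).card : ℤ) := by
            refine Finset.sum_congr rfl fun x _ => ?_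
            rw [← Finset.sum_filter, Finset.sum_const, nsmul_eq_mul]
            ring
    rw [hswap]
    have hEH : E = (indG G X).edgeFinset := by
      ext e
      induction e using Sym2.ind with
      | _ a b =>
        rw [hE, Finset.mem_filter, mem_edgeFinset, mem_edgeSet, mem_edgeFinset, mem_edgeSet,
          Sym2.forall_mem_pair, indG_adj]
    have hcount : ∀ x : V, (E.filter (fun e => x ∈ e)).card = if x ∈ X then dX x else 0 := by
      intro x
      rw [hEH, ← SimpleGraph.incidenceFinset_eq_filter,
        SimpleGraph.card_incidenceFinset_eq_degree]
      by_cases hx : x ∈ X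
      · rw [if_pos hx, ← SimpleGraph.card_neighborFinset_eq_degree]
        show ((indG G X).neighborFinset x).card = (G.neighborFinset x ∩ X).card
        congr 1
        ext y
        simp only [mem_neighborFinset, indG_adj, Finset.mem_inter]
        tauto
      · rw [if_neg hx, ← SimpleGraph.card_neighborFinset_eq_degree, Finset.card_eq_zero,
          Finset.eq_empty_iff_forall_notMem]
        intro y hy
        rw [mem_neighborFinset, indG_adj] at hy
        exact hx hy.2.1
    calc ∑ x : V, (dX x : ℤ) * ((E.filter (fun e => x ∈ e)).card : ℤ)
        = ∑ x : V, (if x ∈ X then (dX x : ℤ) ^ 2 else 0) := by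
          refine Finset.sum_congr rfl fun x _ => ?_
          rw [hcount x]
          by_cases hx : x ∈ X <;> simp [hx] <;> push_cast <;> ring
      _ = ∑ x ∈ X, (dX x : ℤ) ^ 2 := by
          rw [← Finset.sum_filter, Finset.filter_mem_eq_inter, Finset.univ_inter]
  -- assemble
  have hsum : ∑ e ∈ E, ((2 * k - ((Xᶜ : Finset V).card : ℤ))
      - (∑ x ∈ Finset.univ.filter (· ∈ e), (dX x : ℤ))) ≤ ∑ e ∈ E, ((W e).card : ℤ) :=
    Finset.sum_le_sum key3
  rw [Finset.sum_sub_distrib, Finset.sum_const, key4, nsmul_eq_mul] at hsum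
  have hfin : ((E.sigma W).card : ℤ) ≤ ((G.cliqueFinset 3).card : ℤ) := by exact_mod_cast key1
  rw [key2] at hfin
  calc ((E.card : ℤ)) * (2 * k - ((Xᶜ : Finset V).card : ℤ)) - ∑ x ∈ X, (dX x : ℤ) ^ 2
      ≤ ∑ e ∈ E, ((W e).card : ℤ) := hsum
    _ ≤ ((G.cliqueFinset 3).card : ℤ) := hfin
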